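/- Let S be a real n×n matrix, F ∈ ℝ^n (regarded as a row vector), and let v₀ : [0,∞) → ℝ^n be a differentiable function satisfying v₀'(t) = S v₀(t) for all t ≥ 0 and bounded on [0,∞); set y₀(t) = F·v₀(t), so that the k-th derivative of y₀ satisfies y₀^{(k)}(t) = F·(S^k v₀(t)). Let v : [0,∞) → ℝ^n and A : [0,∞) → ℝ^{n×n} be bounded functions, and suppose there exist c > 0 and λ > 0 such that ‖v(t) − v₀(t)‖ ≤ c·e^{−λt} and ‖A(t) − S‖ ≤ c·e^{−λt} for all t ≥ 0. Then for every natural number k ≥ 0 there exists c' > 0 such that |F·(A(t)^k v(t)) − y₀^{(k)}(t)| ≤ c'·e^{−λt} for all t ≥ 0; in particular F·(A(t)^k v(t)) − y₀^{(k)}(t) → 0 exponentially as t → ∞. -/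

import Mathlib

open scoped Matrix.Norms.L2Operator RealInnerProductSpace

/-- `‖T^k‖ ≤ N^k` when `‖T‖ ≤ N`, valid even without `NormOneClass`. -/
lemma norm_pow_le_of_le {E : Type*} [NormedAddCommGroup E] [NormedSpace ℝ E]
    {T : E →L[ℝ] E} {N : ℝ} (hT : ‖T‖ ≤ N) : ∀ k : ℕ, ‖T ^ k‖ ≤ N ^ k := by
  have hN0 : 0 ≤ N := le_trans (norm_nonneg _) hT
  intro k
  induction k with
  | zero =>
    simpa [pow_zero, ContinuousLinearMap.one_def] using ContinuousLinearMap.norm_id_le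
  | succ j ih =>
    calc ‖T ^ (j+1)‖ = ‖T ^ j * T‖ := by rw [pow_succ]
      _ ≤ ‖T ^ j‖ * ‖T‖ := norm_mul_le _ _
      _ ≤ N ^ j * N := mul_le_mul ih hT (norm_nonneg _) (pow_nonneg hN0 j)
      _ = N ^ (j+1) := (pow_succ N j).symm

/-- Bound for difference of powers in a normed ring of CLMs. -/
lemma pow_sub_pow_bound {E : Type*} [NormedAddCommGroup E] [NormedSpace ℝ E]
    (T T₀ : E →L[ℝ] E) (N : ℝ) (hN1 : 1 ≤ N) (hT : ‖T‖ ≤ N) (hT₀ : ‖T₀‖ ≤ N) :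
    ∀ k : ℕ, ‖T ^ k - T₀ ^ k‖ ≤ k * N ^ k * ‖T - T₀‖ := by
  intro k
  induction k with
  | zero => simp
  | succ j ih =>
    have hNpos : (0:ℝ) < N := lt_of_lt_of_le one_pos hN1
    have hNj : (0:ℝ) ≤ N ^ j := le_of_lt (pow_pos hNpos j)
    have key : T ^ (j+1) - T₀ ^ (j+1) = T ^ j * (T - T₀) + (T ^ j - T₀ ^ j) * T₀ := by
      simp [pow_succ, mul_sub, sub_mul]
    rw [key]
    calc ‖T ^ j * (T - T₀) + (T ^ j - T₀ ^ j) * T₀‖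
        ≤ ‖T ^ j * (T - T₀)‖ + ‖(T ^ j - T₀ ^ j) * T₀‖ := norm_add_le _ _
      _ ≤ ‖T ^ j‖ * ‖T - T₀‖ + ‖T ^ j - T₀ ^ j‖ * ‖T₀‖ := by
          gcongr <;> exact norm_mul_le _ _
      _ ≤ N ^ j * ‖T - T₀‖ + (j * N ^ j * ‖T - T₀‖) * N := by
          gcongr <;> first
            | exact norm_pow_le_of_le hT j
            | exact norm_nonneg _
      _ ≤ (j+1 : ℕ) * N ^ (j+1) * ‖T - T₀‖ := by
          have h1 : N ^ j ≤ N ^ (j+1) := pow_le_pow_right₀ hN1 (Nat.le_succ j)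
          have h2 : (j * N ^ j * ‖T - T₀‖) * N = j * N ^ (j+1) * ‖T - T₀‖ := by
            ring
          rw [h2]
          have hd := norm_nonneg (T - T₀)
          have h3 : N ^ j * ‖T - T₀‖ ≤ N ^ (j+1) * ‖T - T₀‖ :=
            mul_le_mul_of_nonneg_right h1 hd
          push_cast
          nlinarith

set_option maxHeartbeats 1000000 in
/-- If `v₀' = S v₀` with `v₀` bounded on `[0,∞)`, `y₀ = F·v₀`, and the bounded signals
`v(t)`, `A(t)` converge exponentially (rate `λ`) to `v₀(t)` and `S` respectively, then for
every `k` the quantity `F·(A(t)^k v(t)) − y₀^{(k)}(t)` converges to `0` exponentially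
(rate `λ`). -/
theorem stmt_2 {n : ℕ} (S : Matrix (Fin n) (Fin n) ℝ) (F : EuclideanSpace ℝ (Fin n))
    (v₀ : ℝ → EuclideanSpace ℝ (Fin n))
    (hv₀d : ∀ t, HasDerivAt v₀ (Matrix.toEuclideanCLM (𝕜 := ℝ) S (v₀ t)) t)
    (hv₀b : ∃ M, ∀ t ≥ (0 : ℝ), ‖v₀ t‖ ≤ M)
    (v : ℝ → EuclideanSpace ℝ (Fin n)) (A : ℝ → Matrix (Fin n) (Fin n) ℝ)
    (hvb : ∃ M, ∀ t ≥ (0 : ℝ), ‖v t‖ ≤ M) (hAb : ∃ M, ∀ t ≥ (0 : ℝ), ‖A t‖ ≤ M)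
    (c lam : ℝ) (hc : 0 < c) (hlam : 0 < lam)
    (hvconv : ∀ t ≥ (0 : ℝ), ‖v t - v₀ t‖ ≤ c * Real.exp (-lam * t))
    (hAconv : ∀ t ≥ (0 : ℝ), ‖A t - S‖ ≤ c * Real.exp (-lam * t)) (k : ℕ) :
    ∃ c' > 0, ∀ t ≥ (0 : ℝ),
      |⟪F, Matrix.toEuclideanCLM (𝕜 := ℝ) (A t ^ k) (v t)⟫ -
          iteratedDeriv k (fun τ => ⟪F, v₀ τ⟫) t| ≤ c' * Real.exp (-lam * t) := by
  set T₀ : EuclideanSpace ℝ (Fin n) →L[ℝ] EuclideanSpace ℝ (Fin n) :=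
    Matrix.toEuclideanCLM (𝕜 := ℝ) S with hT₀def
  -- iterated derivative formula
  have hiter : ∀ j : ℕ, ∀ t : ℝ,
      iteratedDeriv j (fun τ => ⟪F, v₀ τ⟫) t = ⟪F, (T₀ ^ j) (v₀ t)⟫ := by
    intro j
    induction j with
    | zero => intro t; simp [iteratedDeriv_zero]
    | succ j ih =>
      intro t
      have hfun : iteratedDeriv j (fun τ => ⟪F, v₀ τ⟫) =
          fun t => ⟪F, (T₀ ^ j) (v₀ t)⟫ := funext ih
      rw [iteratedDeriv_succ, hfun]
      have hda : HasDerivAt (fun t => ⟪F, (T₀ ^ j) (v₀ t)⟫)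
          (⟪F, (T₀ ^ (j+1)) (v₀ t)⟫) t := by
        have h := ((innerSL ℝ F).comp (T₀ ^ j)).hasFDerivAt.comp_hasDerivAt t (hv₀d t)
        have heq : ((innerSL ℝ F).comp (T₀ ^ j)) (T₀ (v₀ t)) = ⟪F, (T₀ ^ (j+1)) (v₀ t)⟫ := by
          simp [pow_succ, ContinuousLinearMap.mul_apply]
        rw [heq] at h
        exact h
      exact hda.deriv
  -- bounds
  obtain ⟨Mv₀, hMv₀⟩ := hv₀b
  obtain ⟨MA, hMA⟩ := hAb
  set N : ℝ := max MA (max ‖T₀‖ 1) with hNdef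
  have hN1 : 1 ≤ N := le_max_of_le_right (le_max_right _ _)
  have hNT₀ : ‖T₀‖ ≤ N := le_max_of_le_right (le_max_left _ _)
  have hNpos : (0:ℝ) < N := lt_of_lt_of_le one_pos hN1
  set Mv : ℝ := max Mv₀ 0 with hMvdef
  set c' : ℝ := ‖F‖ * (N ^ k * c + (k * N ^ k) * c * Mv) + 1 with hc'def
  have hc'pos : 0 < c' := by
    have h1 : (0:ℝ) ≤ ‖F‖ * (N ^ k * c + (k * N ^ k) * c * Mv) := by
      have hNk : (0:ℝ) ≤ N ^ k := le_of_lt (pow_pos hNpos k)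
      have : (0:ℝ) ≤ Mv := le_max_right _ _
      positivity
    linarith
  refine ⟨c', hc'pos, fun t ht => ?_⟩
  set T : EuclideanSpace ℝ (Fin n) →L[ℝ] EuclideanSpace ℝ (Fin n) :=
    Matrix.toEuclideanCLM (𝕜 := ℝ) (A t) with hTdef
  have hmap : Matrix.toEuclideanCLM (𝕜 := ℝ) (A t ^ k) = T ^ k := map_pow _ _ _
  have hmapsub : Matrix.toEuclideanCLM (𝕜 := ℝ) (A t - S) = T - T₀ := map_sub _ _ _
  have hnormT : ‖T‖ = ‖A t‖ := (Matrix.cstar_norm_def (A t)).symm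
  have hnormTS : ‖T - T₀‖ = ‖A t - S‖ := by
    rw [← hmapsub]; exact (Matrix.cstar_norm_def _).symm
  have hNT : ‖T‖ ≤ N := by
    rw [hnormT]; exact le_trans (hMA t ht) (le_max_left _ _)
  rw [hiter k t, hmap]
  have hinner : ⟪F, (T ^ k) (v t)⟫ - ⟪F, (T₀ ^ k) (v₀ t)⟫ =
      ⟪F, (T ^ k) (v t) - (T₀ ^ k) (v₀ t)⟫ := (inner_sub_right _ _ _).symm
  rw [hinner]
  have hE : (T ^ k) (v t) - (T₀ ^ k) (v₀ t) =
      (T ^ k) (v t - v₀ t) + (T ^ k - T₀ ^ k) (v₀ t) := by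
    simp [map_sub, ContinuousLinearMap.sub_apply]
  have e := Real.exp_pos (-lam * t)
  have hbound : ‖(T ^ k) (v t) - (T₀ ^ k) (v₀ t)‖ ≤
      (N ^ k * c + (k * N ^ k) * c * Mv) * Real.exp (-lam * t) := by
    rw [hE]
    have h1 : ‖(T ^ k) (v t - v₀ t)‖ ≤ N ^ k * (c * Real.exp (-lam * t)) := by
      calc ‖(T ^ k) (v t - v₀ t)‖ ≤ ‖T ^ k‖ * ‖v t - v₀ t‖ :=
            ContinuousLinearMap.le_opNorm _ _
        _ ≤ N ^ k * (c * Real.exp (-lam * t)) := by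
            apply mul_le_mul _ (hvconv t ht) (norm_nonneg _) (le_of_lt (pow_pos hNpos k))
            exact norm_pow_le_of_le hNT k
    have h2 : ‖(T ^ k - T₀ ^ k) (v₀ t)‖ ≤ (k * N ^ k * (c * Real.exp (-lam * t))) * Mv := by
      calc ‖(T ^ k - T₀ ^ k) (v₀ t)‖ ≤ ‖T ^ k - T₀ ^ k‖ * ‖v₀ t‖ :=
            ContinuousLinearMap.le_opNorm _ _
        _ ≤ (k * N ^ k * (c * Real.exp (-lam * t))) * Mv := by
            apply mul_le_mul _ ((hMv₀ t ht).trans (le_max_left _ _)) (norm_nonneg _)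
            · have hNk : (0:ℝ) ≤ N ^ k := le_of_lt (pow_pos hNpos k)
              positivity
            · calc ‖T ^ k - T₀ ^ k‖ ≤ k * N ^ k * ‖T - T₀‖ :=
                  pow_sub_pow_bound T T₀ N hN1 hNT hNT₀ k
                _ ≤ k * N ^ k * (c * Real.exp (-lam * t)) := by
                    apply mul_le_mul_of_nonneg_left
                    · rw [hnormTS]; exact hAconv t ht
                    · have hNk : (0:ℝ) ≤ N ^ k := le_of_lt (pow_pos hNpos k)
                      positivity
    calc ‖(T ^ k) (v t - v₀ t) + (T ^ k - T₀ ^ k) (v₀ t)‖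
        ≤ ‖(T ^ k) (v t - v₀ t)‖ + ‖(T ^ k - T₀ ^ k) (v₀ t)‖ := norm_add_le _ _
      _ ≤ N ^ k * (c * Real.exp (-lam * t)) + (k * N ^ k * (c * Real.exp (-lam * t))) * Mv :=
          add_le_add h1 h2
      _ = (N ^ k * c + (k * N ^ k) * c * Mv) * Real.exp (-lam * t) := by ring
  calc |⟪F, (T ^ k) (v t) - (T₀ ^ k) (v₀ t)⟫|
      ≤ ‖F‖ * ‖(T ^ k) (v t) - (T₀ ^ k) (v₀ t)‖ := abs_real_inner_le_norm _ _
    _ ≤ ‖F‖ * ((N ^ k * c + (k * N ^ k) * c * Mv) * Real.exp (-lam * t)) :=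
        mul_le_mul_of_nonneg_left hbound (norm_nonneg _)
    _ ≤ c' * Real.exp (-lam * t) := by
        rw [hc'def]
        nlinarith [Real.exp_pos (-lam * t), norm_nonneg F]
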